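/- Let A ∈ ℝ^{n×n}, B ∈ ℝ^{n×m}, t₀ < t_f. If for every continuous input u the reachability map u ↦ ∫_{t₀}^{t_f} exp((t_f−s)A) B u(s) ds is surjective onto ℝ^n, then the controllability Gramian ∫_{t₀}^{t_f} exp((t₀−s)A) B Bᵀ exp((t₀−s)A)ᵀ ds is invertible. -/

import Mathlib

open Matrix intervalIntegral

lemma exp_smul_continuous {n : ℕ} (A : Matrix (Fin n) (Fin n) ℝ) (c : ℝ) :
    Continuous fun s : ℝ => NormedSpace.exp ((c - s) • A) := by
  letI : SeminormedRing (Matrix (Fin n) (Fin n) ℝ) := Matrix.linftyOpSemiNormedRing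
  letI : NormedRing (Matrix (Fin n) (Fin n) ℝ) := Matrix.linftyOpNormedRing
  letI : NormedAlgebra ℝ (Matrix (Fin n) (Fin n) ℝ) := Matrix.linftyOpNormedAlgebra
  letI : NormedAlgebra ℚ (Matrix (Fin n) (Fin n) ℝ) := NormedAlgebra.restrictScalars ℚ ℝ _
  exact NormedSpace.exp_continuous.comp
    ((continuous_const.sub continuous_id).smul continuous_const)

lemma exp_smul_mul_exp_smul {n : ℕ} (A : Matrix (Fin n) (Fin n) ℝ) (a b : ℝ) :
    NormedSpace.exp (a • A) * NormedSpace.exp (b • A)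
      = NormedSpace.exp ((a + b) • A) := by
  rw [add_smul, Matrix.exp_add_of_commute]
  exact ((Commute.refl A).smul_left a).smul_right b

lemma dot_integral_quad_swap {n : ℕ} (f : ℝ → Matrix (Fin n) (Fin n) ℝ) (x : Fin n → ℝ)
    (a b : ℝ)
    (hint : ∀ i j, IntervalIntegrable (fun s => f s i j) MeasureTheory.volume a b) :
    (∫ s in a..b, x ⬝ᵥ (f s *ᵥ x))
      = x ⬝ᵥ ((Matrix.of fun i j => ∫ s in a..b, f s i j : Matrix (Fin n) (Fin n) ℝ) *ᵥ x) := by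
  simp only [dotProduct, mulVec, Matrix.of_apply, Finset.mul_sum]
  rw [intervalIntegral.integral_finset_sum]
  · refine Finset.sum_congr rfl fun i _ => ?_
    rw [intervalIntegral.integral_finset_sum]
    · refine Finset.sum_congr rfl fun j _ => ?_
      rw [intervalIntegral.integral_const_mul, intervalIntegral.integral_mul_const]
    · exact fun j _ => ((hint i j).mul_const (x j)).const_mul (x i)
  · intro i _
    have h := IntervalIntegrable.sum (μ := MeasureTheory.volume) (a := a) (b := b)
      (Finset.univ (α := Fin n))
      (f := fun j => fun s => x i * (f s i j * x j))
      (fun j _ => ((hint i j).mul_const (x j)).const_mul (x i))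
    have e : (∑ j : Fin n, fun s => x i * (f s i j * x j))
        = fun s => ∑ j : Fin n, x i * (f s i j * x j) := by
      funext s; simp [Finset.sum_apply]
    rwa [e] at h

lemma dot_integral_vec_swap {n : ℕ} (y : Fin n → ℝ) (g : ℝ → Fin n → ℝ) (a b : ℝ)
    (hint : ∀ i, IntervalIntegrable (fun s => g s i) MeasureTheory.volume a b) :
    y ⬝ᵥ (fun i => ∫ s in a..b, g s i) = ∫ s in a..b, y ⬝ᵥ g s := by
  simp only [dotProduct]
  have e : ∀ i : Fin n, y i * ∫ s in a..b, g s i = ∫ s in a..b, y i * g s i := fun i =>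
    (intervalIntegral.integral_const_mul _ _).symm
  rw [Finset.sum_congr rfl fun i _ => e i,
    ← intervalIntegral.integral_finset_sum (fun i _ => (hint i).const_mul (y i))]

theorem gramian_invertible_of_reachability_surjective
    {n m : ℕ} (A : Matrix (Fin n) (Fin n) ℝ) (B : Matrix (Fin n) (Fin m) ℝ)
    (t₀ t_f : ℝ) (ht : t₀ < t_f)
    (hsurj : ∀ x : Fin n → ℝ, ∃ u : ℝ → Fin m → ℝ,
      ContinuousOn u (Set.Icc t₀ t_f) ∧
      (fun i => ∫ s in t₀..t_f, (NormedSpace.exp ((t_f - s) • A) *ᵥ (B *ᵥ u s)) i) = x) :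
    IsUnit (Matrix.of fun i j => ∫ s in t₀..t_f,
      (NormedSpace.exp ((t₀ - s) • A) * B * Bᵀ * (NormedSpace.exp ((t₀ - s) • A))ᵀ) i j :
        Matrix (Fin n) (Fin n) ℝ) := by
  classical
  set E : ℝ → Matrix (Fin n) (Fin n) ℝ := fun s => NormedSpace.exp ((t₀ - s) • A) with hEdef
  set F : ℝ → Matrix (Fin n) (Fin n) ℝ := fun s => NormedSpace.exp ((t_f - s) • A) with hFdef
  by_contra hW
  rw [Matrix.isUnit_iff_isUnit_det, isUnit_iff_ne_zero, not_not] at hW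
  obtain ⟨x, hx0, hxW⟩ := (Matrix.exists_mulVec_eq_zero_iff).2 hW
  -- continuity facts
  have hEc : Continuous E := exp_smul_continuous A t₀
  have hFc : Continuous F := exp_smul_continuous A t_f
  have hMc : Continuous fun s => E s * B * Bᵀ * (E s)ᵀ :=
    ((hEc.matrix_mul continuous_const).matrix_mul continuous_const).matrix_mul
      hEc.matrix_transpose
  have hentry : ∀ i j, Continuous fun s => (E s * B * Bᵀ * (E s)ᵀ) i j := fun i j =>
    (continuous_apply j).comp ((continuous_apply i).comp hMc)
  have hint : ∀ i j, IntervalIntegrable (fun s => (E s * B * Bᵀ * (E s)ᵀ) i j)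
      MeasureTheory.volume t₀ t_f := fun i j => (hentry i j).intervalIntegrable _ _
  -- the quadratic form of the Gramian at x vanishes
  have hq0 : (∫ s in t₀..t_f, x ⬝ᵥ ((E s * B * Bᵀ * (E s)ᵀ) *ᵥ x)) = 0 := by
    rw [dot_integral_quad_swap _ x t₀ t_f hint, hxW, dotProduct_zero]
  -- rewrite the quadratic form as a dot product with itself
  have hform : ∀ s, x ⬝ᵥ ((E s * B * Bᵀ * (E s)ᵀ) *ᵥ x)
      = ((E s * B)ᵀ *ᵥ x) ⬝ᵥ ((E s * B)ᵀ *ᵥ x) := by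
    intro s
    have h1 : E s * B * Bᵀ * (E s)ᵀ = (E s * B) * (E s * B)ᵀ := by
      rw [Matrix.transpose_mul, ← Matrix.mul_assoc]
    rw [h1, ← Matrix.mulVec_mulVec, Matrix.dotProduct_mulVec, Matrix.mulVec_transpose]
  -- the function s ↦ (E s * B)ᵀ *ᵥ x vanishes on Ioc t₀ t_f
  have hwc : Continuous fun s => ((E s * B)ᵀ *ᵥ x) ⬝ᵥ ((E s * B)ᵀ *ᵥ x) := by
    have h2 : Continuous fun s => (E s * B)ᵀ *ᵥ x :=
      ((hEc.matrix_mul continuous_const).matrix_transpose).matrix_mulVec continuous_const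
    exact h2.dotProduct h2
  have hv0 : ∀ s ∈ Set.Ioc t₀ t_f, (E s * B)ᵀ *ᵥ x = 0 := by
    have hae : (fun s => ((E s * B)ᵀ *ᵥ x) ⬝ᵥ ((E s * B)ᵀ *ᵥ x))
        =ᵐ[MeasureTheory.volume.restrict (Set.Ioc t₀ t_f)] 0 := by
      refine (intervalIntegral.integral_eq_zero_iff_of_le_of_nonneg_ae ht.le ?_ ?_).1 ?_
      · exact MeasureTheory.ae_of_all _ fun s =>
          Finset.sum_nonneg fun k _ => mul_self_nonneg _
      · exact hwc.intervalIntegrable _ _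
      · rw [← hq0]; exact intervalIntegral.integral_congr fun s _ => (hform s).symm
    have heq := MeasureTheory.Measure.eqOn_Ioc_of_ae_eq (μ := MeasureTheory.volume) hae
      hwc.continuousOn continuousOn_const
    exact fun s hs => dotProduct_self_eq_zero.1 (heq hs)
  -- build the vector y orthogonal to the image of the reachability map
  set G : Matrix (Fin n) (Fin n) ℝ := NormedSpace.exp ((t₀ - t_f) • A) with hGdef
  set y : Fin n → ℝ := Gᵀ *ᵥ x with hydef
  have hGF : ∀ s, G * F s = E s := by
    intro s
    show NormedSpace.exp ((t₀ - t_f) • A) * NormedSpace.exp ((t_f - s) • A)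
      = NormedSpace.exp ((t₀ - s) • A)
    rw [exp_smul_mul_exp_smul]
    congr 2
    ring
  have hy0 : y ≠ 0 := by
    intro h
    apply hx0
    have hE0 : E t₀ = 1 := by
      show NormedSpace.exp ((t₀ - t₀) • A) = 1
      rw [sub_self, zero_smul, NormedSpace.exp_zero]
    have hxy : (F t₀)ᵀ *ᵥ y = x := by
      rw [hydef, Matrix.mulVec_mulVec, ← Matrix.transpose_mul, hGF t₀, hE0,
        Matrix.transpose_one, Matrix.one_mulVec]
    rw [← hxy, h, Matrix.mulVec_zero]
  obtain ⟨u, hu, hru⟩ := hsurj y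
  -- integrability of the reachability integrand components
  have hgc : ∀ i, ContinuousOn (fun s => (F s *ᵥ (B *ᵥ u s)) i) (Set.Icc t₀ t_f) := by
    intro i
    simp only [mulVec, dotProduct]
    apply continuousOn_finset_sum
    intro j _
    refine ContinuousOn.mul ?_ ?_
    · exact ((continuous_apply j).comp ((continuous_apply i).comp hFc)).continuousOn
    · apply continuousOn_finset_sum
      intro k _
      exact continuousOn_const.mul ((continuous_apply k).comp_continuousOn hu)
  have hgint : ∀ i, IntervalIntegrable (fun s => (F s *ᵥ (B *ᵥ u s)) i)
      MeasureTheory.volume t₀ t_f := by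
    intro i
    apply ContinuousOn.intervalIntegrable
    rw [Set.uIcc_of_le ht.le]
    exact hgc i
  -- conclude y ⬝ᵥ y = 0
  have hyy : y ⬝ᵥ y = 0 := by
    have h1 := dot_integral_vec_swap y (fun s => F s *ᵥ (B *ᵥ u s)) t₀ t_f hgint
    rw [hru] at h1
    rw [h1]
    have hzero : ∀ s ∈ Set.Ioc t₀ t_f, y ⬝ᵥ (F s *ᵥ (B *ᵥ u s)) = 0 := by
      intro s hsIoc
      have hy' : y ᵥ* (F s * B) = 0 := by
        calc y ᵥ* (F s * B) = (x ᵥ* G) ᵥ* (F s * B) := by rw [hydef, Matrix.mulVec_transpose]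
          _ = x ᵥ* (G * (F s * B)) := Matrix.vecMul_vecMul _ _ _
          _ = x ᵥ* (E s * B) := by rw [← Matrix.mul_assoc, hGF s]
          _ = (E s * B)ᵀ *ᵥ x := (Matrix.mulVec_transpose _ x).symm
          _ = 0 := hv0 s hsIoc
      rw [Matrix.mulVec_mulVec, Matrix.dotProduct_mulVec, hy', zero_dotProduct]
    have hcongr : (∫ s in t₀..t_f, y ⬝ᵥ (F s *ᵥ (B *ᵥ u s))) = ∫ s in t₀..t_f, (0 : ℝ) := by
      apply intervalIntegral.integral_congr_ae
      filter_upwards with s hs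
      rw [Set.uIoc_of_le ht.le] at hs
      exact hzero s hs
    rw [hcongr, intervalIntegral.integral_zero]
  exact hy0 (dotProduct_self_eq_zero.1 hyy)
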